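/- For a continuous flow φ and compact sets Q̃ ⊂ Q with A_Q ⊂ Q̃, it holds that A_Q = A_{Q̃}. -/

import Mathlib

/-- For a continuous flow `φ` and compact `Q̃ ⊆ Q` with `A_Q ⊆ Q̃`, we have `A_Q = A_{Q̃}`. -/
theorem flow_attractor_restrict (d : ℕ)
    (φ : ℝ → EuclideanSpace ℝ (Fin d) → EuclideanSpace ℝ (Fin d))
    (hcont : Continuous fun p : ℝ × EuclideanSpace ℝ (Fin d) => φ p.1 p.2)
    (hφ0 : ∀ x, φ 0 x = x)
    (hφadd : ∀ s t x, φ (s + t) x = φ s (φ t x))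
    (Q Qt : Set (EuclideanSpace ℝ (Fin d)))
    (hQ : IsCompact Q) (hQt : IsCompact Qt) (hsub : Qt ⊆ Q)
    (hA : (⋂ t ∈ Set.Ici (0 : ℝ), φ t '' Q) ⊆ Qt) :
    (⋂ t ∈ Set.Ici (0 : ℝ), φ t '' Q) = ⋂ t ∈ Set.Ici (0 : ℝ), φ t '' Qt := by
  have hinv : ∀ (t : ℝ) z, φ (-t) (φ t z) = z := fun t z => by
    rw [← hφadd]; simp [hφ0]
  have hinv' : ∀ (t : ℝ) z, φ t (φ (-t) z) = z := fun t z => by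
    rw [← hφadd]; simp [hφ0]
  apply Set.Subset.antisymm
  · intro x hx
    simp only [Set.mem_iInter, Set.mem_Ici] at hx ⊢
    intro t ht
    refine ⟨φ (-t) x, hA ?_, hinv' t x⟩
    simp only [Set.mem_iInter, Set.mem_Ici]
    intro u hu
    obtain ⟨q, hq, hqx⟩ := hx (t + u) (by linarith)
    refine ⟨q, hq, ?_⟩
    rw [← hqx, hφadd, hinv]
  · exact Set.iInter₂_mono fun t _ => Set.image_mono hsub
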